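/- The Choi–Lam–Reznick form S(x,y,z) = x^4*y^2 + y^4*z^2 + z^4*x^2 - 3*x^2*y^2*z^2 is nonnegative on ℝ^3 (i.e., S(x,y,z) >= 0 for all real x, y, z), but S is not a sum of squares of polynomials in ℝ[x,y,z]. -/

import Mathlib

open MvPolynomial

namespace CLRAux

open Finsupp

noncomputable def M (a b c : ℕ) : Fin 3 →₀ ℕ :=
  Finsupp.single 0 a + Finsupp.single 1 b + Finsupp.single 2 c

lemma M_apply (a b c : ℕ) : M a b c 0 = a ∧ M a b c 1 = b ∧ M a b c 2 = c := by
  refine ⟨?_, ?_, ?_⟩ <;> simp [M, Finsupp.single_apply]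

lemma eq_M (d : Fin 3 →₀ ℕ) : d = M (d 0) (d 1) (d 2) := by
  ext j; fin_cases j <;> simp [M, Finsupp.single_apply]

lemma M_add (a b c a' b' c' : ℕ) : M a b c + M a' b' c' = M (a + a') (b + b') (c + c') := by
  ext j; fin_cases j <;> simp [M, Finsupp.single_apply]

lemma M_add_eq {x y z X Y Z : ℕ} (h0 : x + x = X) (h1 : y + y = Y) (h2 : z + z = Z) :
    M x y z + M x y z = M X Y Z := by rw [M_add, h0, h1, h2]

lemma M_eq_M {a b c a' b' c' : ℕ} : M a b c = M a' b' c' ↔ a = a' ∧ b = b' ∧ c = c' := by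
  constructor
  · intro h
    refine ⟨?_, ?_, ?_⟩
    · have := congrArg (fun f => f (0 : Fin 3)) h
      simpa [(M_apply a b c).1, (M_apply a' b' c').1] using this
    · have := congrArg (fun f => f (1 : Fin 3)) h
      simpa [(M_apply a b c).2.1, (M_apply a' b' c').2.1] using this
    · have := congrArg (fun f => f (2 : Fin 3)) h
      simpa [(M_apply a b c).2.2, (M_apply a' b' c').2.2] using this
  · rintro ⟨rfl, rfl, rfl⟩; rfl

lemma eqv (a : Fin 3 →₀ ℕ) (x y z : ℕ) (h0 : a 0 = x) (h1 : a 1 = y) (h2 : a 2 = z) :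
    a = M x y z := by rw [eq_M a, h0, h1, h2]

lemma deg3 (d : Fin 3 →₀ ℕ) : d.degree = d 0 + d 1 + d 2 := by
  rw [Finsupp.degree_apply, Finset.sum_subset (Finset.subset_univ d.support)]
  · simp [Fin.sum_univ_three]
  · intro x _ hx
    simpa using (Finsupp.notMem_support_iff.mp hx)

lemma Mdeg (a b c : ℕ) : (M a b c).degree = a + b + c := by
  rw [deg3, (M_apply a b c).1, (M_apply a b c).2.1, (M_apply a b c).2.2]

lemma vals (a b : Fin 3 →₀ ℕ) (x y z : ℕ) (h : a + b = M x y z) :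
    a 0 + b 0 = x ∧ a 1 + b 1 = y ∧ a 2 + b 2 = z := by
  refine ⟨?_, ?_, ?_⟩
  · have := congrArg (fun f => f (0 : Fin 3)) h; simpa [(M_apply x y z).1] using this
  · have := congrArg (fun f => f (1 : Fin 3)) h; simpa [(M_apply x y z).2.1] using this
  · have := congrArg (fun f => f (2 : Fin 3)) h; simpa [(M_apply x y z).2.2] using this

noncomputable def P : MvPolynomial (Fin 3) ℝ :=
  (X 0) ^ 4 * (X 1) ^ 2 + (X 1) ^ 4 * (X 2) ^ 2 + (X 2) ^ 4 * (X 0) ^ 2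
    - 3 * (X 0) ^ 2 * (X 1) ^ 2 * (X 2) ^ 2

lemma hP : P = monomial (M 4 2 0) 1 + monomial (M 0 4 2) 1 + monomial (M 2 0 4) 1
    + monomial (M 2 2 2) (-3) := by
  have h3 : (3 : MvPolynomial (Fin 3) ℝ) = C 3 := by
    rw [← map_ofNat (C : ℝ →+* MvPolynomial (Fin 3) ℝ) 3]
  have hneg : (monomial (M 2 2 2) (-3) : MvPolynomial (Fin 3) ℝ) = - monomial (M 2 2 2) 3 := by
    rw [show (-3 : ℝ) = -(3:ℝ) by norm_num, map_neg]
  rw [hneg, ← sub_eq_add_neg]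
  simp only [P, M, h3, X_pow_eq_monomial, monomial_mul, C_mul_monomial, one_mul, mul_one,
    Finsupp.single_zero, add_zero, zero_add]
  rw [add_comm (Finsupp.single (2 : Fin 3) 4) (Finsupp.single 0 2)]

lemma coeffP600 : coeff (M 6 0 0) P = 0 := by simp [hP, coeff_monomial, M_eq_M]
lemma coeffP060 : coeff (M 0 6 0) P = 0 := by simp [hP, coeff_monomial, M_eq_M]
lemma coeffP006 : coeff (M 0 0 6) P = 0 := by simp [hP, coeff_monomial, M_eq_M]
lemma coeffP402 : coeff (M 4 0 2) P = 0 := by simp [hP, coeff_monomial, M_eq_M]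
lemma coeffP240 : coeff (M 2 4 0) P = 0 := by simp [hP, coeff_monomial, M_eq_M]
lemma coeffP024 : coeff (M 0 2 4) P = 0 := by simp [hP, coeff_monomial, M_eq_M]
lemma coeffP222 : coeff (M 2 2 2) P = -3 := by simp [hP, coeff_monomial, M_eq_M]

lemma PtotalDegree : P.totalDegree ≤ 6 := by
  have tdm : ∀ (s : Fin 3 →₀ ℕ) (r : ℝ), (monomial s r).totalDegree ≤ s.degree :=
    fun s r => totalDegree_monomial_le s r
  rw [hP]
  refine le_trans (totalDegree_add _ _) (max_le (le_trans (totalDegree_add _ _)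
    (max_le (le_trans (totalDegree_add _ _) (max_le ?_ ?_)) ?_)) ?_) <;>
    exact le_trans (tdm _ _) (le_of_eq (Mdeg _ _ _))

lemma coeff_zero_of_deg {p : MvPolynomial (Fin 3) ℝ} {d : Fin 3 →₀ ℕ}
    (h : p.totalDegree < d.degree) : coeff d p = 0 :=
  coeff_eq_zero_of_totalDegree_lt h

lemma sos_zero {k : ℕ} {p : Fin k → MvPolynomial (Fin 3) ℝ} (h : ∑ i, p i ^ 2 = 0)
    (i : Fin k) : p i = 0 := by
  apply MvPolynomial.funext
  intro v
  have hv : ∑ j, (eval v (p j)) ^ 2 = 0 := by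
    have := congrArg (eval v) h
    simpa using this
  have := (Finset.sum_eq_zero_iff_of_nonneg (fun j _ => sq_nonneg (eval v (p j)))).mp hv i
    (Finset.mem_univ i)
  simpa [pow_eq_zero_iff] using this

lemma top_ne {p : MvPolynomial (Fin 3) ℝ} (hp : p ≠ 0) :
    homogeneousComponent p.totalDegree p ≠ 0 := by
  obtain ⟨d, hd, hsum⟩ := Finset.exists_mem_eq_sup p.support
    (MvPolynomial.support_nonempty.mpr hp) Finsupp.degree
  intro h
  have h1 : coeff d (homogeneousComponent p.totalDegree p) = coeff d p := by
    have hsum' : d.degree = p.totalDegree := hsum.symm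
    rw [coeff_homogeneousComponent, if_pos hsum']
  rw [h] at h1
  exact (MvPolynomial.mem_support_iff.mp hd) h1.symm

lemma degree_add3 (a b : Fin 3 →₀ ℕ) : (a + b).degree = a.degree + b.degree := by
  simp only [deg3, Finsupp.add_apply]; ring

lemma mul_top {p q : MvPolynomial (Fin 3) ℝ} {m : ℕ} (hp : p.totalDegree ≤ m)
    (hq : q.totalDegree ≤ m) :
    homogeneousComponent (m + m) (p * q)
      = homogeneousComponent m p * homogeneousComponent m q := by
  apply MvPolynomial.ext
  intro d
  rw [coeff_homogeneousComponent, coeff_mul, coeff_mul]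
  simp only [coeff_homogeneousComponent]
  split_ifs with h
  · apply Finset.sum_congr rfl
    intro ab hab
    rw [Finset.HasAntidiagonal.mem_antidiagonal] at hab
    have hsum : ab.1.degree + ab.2.degree = m + m := by rw [← degree_add3, hab, h]
    by_cases h1 : ab.1.degree = m
    · have h2 : ab.2.degree = m := by omega
      rw [if_pos h1, if_pos h2]
    · rcases Nat.lt_or_ge ab.1.degree m with hlt | hge
      · have h2 : m < ab.2.degree := by omega
        rw [coeff_zero_of_deg (lt_of_le_of_lt hq h2), if_neg h1]
        simp
      · have h1' : m < ab.1.degree := lt_of_le_of_ne hge (Ne.symm h1)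
        rw [coeff_zero_of_deg (lt_of_le_of_lt hp h1'), if_neg h1]
        simp
  · symm
    apply Finset.sum_eq_zero
    intro ab hab
    rw [Finset.HasAntidiagonal.mem_antidiagonal] at hab
    have hsum : ab.1.degree + ab.2.degree = d.degree := by rw [← degree_add3, hab]
    by_cases h1 : ab.1.degree = m
    · have h2 : ab.2.degree ≠ m := by omega
      rw [if_neg h2, mul_zero]
    · rw [if_neg h1, zero_mul]

end CLRAux

open CLRAux

set_option maxHeartbeats 1000000 in
/-- The Choi–Lam–Reznick form `S(x,y,z) = x⁴y² + y⁴z² + z⁴x² - 3x²y²z²` is nonnegative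
on `ℝ³` but is not a sum of squares of polynomials. -/
theorem choi_lam_reznick_nonneg_not_sos :
    (∀ v : Fin 3 → ℝ, 0 ≤ eval v ((X 0) ^ 4 * (X 1) ^ 2 + (X 1) ^ 4 * (X 2) ^ 2
        + (X 2) ^ 4 * (X 0) ^ 2 - 3 * (X 0) ^ 2 * (X 1) ^ 2 * (X 2) ^ 2 :
        MvPolynomial (Fin 3) ℝ)) ∧
    ¬ ∃ (k : ℕ) (q : Fin k → MvPolynomial (Fin 3) ℝ),
      (X 0) ^ 4 * (X 1) ^ 2 + (X 1) ^ 4 * (X 2) ^ 2 + (X 2) ^ 4 * (X 0) ^ 2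
        - 3 * (X 0) ^ 2 * (X 1) ^ 2 * (X 2) ^ 2 = ∑ i, (q i) ^ 2 := by
  constructor
  · intro v
    simp only [map_add, map_sub, map_mul, map_pow, eval_X, map_ofNat]
    set x := v 0; set y := v 1; set z := v 2
    nlinarith [sq_nonneg (x^2*y - y*z^2), sq_nonneg (y^2*z - z*x^2), sq_nonneg (z^2*x - x*y^2),
      sq_nonneg (x*y - y*z), sq_nonneg (y*z - z*x), sq_nonneg (z*x - x*y),
      sq_nonneg x, sq_nonneg y, sq_nonneg z, sq_nonneg (x*y*z)]
  · rintro ⟨k, q, hq⟩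
    have hq' : P = ∑ i, q i ^ 2 := hq
    -- every `q i` has total degree at most 3
    have hdeg : ∀ i, (q i).totalDegree ≤ 3 := by
      by_contra hcon
      push_neg at hcon
      obtain ⟨i0, hi0⟩ := hcon
      set m := Finset.univ.sup (fun i => (q i).totalDegree) with hm
      have hm3 : 3 < m :=
        lt_of_lt_of_le hi0 (Finset.le_sup (f := fun i => (q i).totalDegree) (Finset.mem_univ i0))
      have hsum : homogeneousComponent (m + m) P
          = ∑ i, (homogeneousComponent m (q i)) ^ 2 := by
        rw [hq', map_sum]
        refine Finset.sum_congr rfl fun i _ => ?_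
        have hle : (q i).totalDegree ≤ m :=
          Finset.le_sup (f := fun i => (q i).totalDegree) (Finset.mem_univ i)
        rw [sq, sq, mul_top hle hle]
      have hz : homogeneousComponent (m + m) P = 0 := by
        apply homogeneousComponent_eq_zero
        have h6 := PtotalDegree
        omega
      have hcz : ∀ i, homogeneousComponent m (q i) = 0 :=
        fun i => sos_zero (hsum.symm.trans hz) i
      obtain ⟨j, _, hj⟩ := Finset.exists_mem_eq_sup Finset.univ
        ⟨i0, Finset.mem_univ i0⟩ (fun i => (q i).totalDegree)
      have hqj : q j ≠ 0 := by
        intro h0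
        rw [← hm] at hj
        rw [h0, totalDegree_zero] at hj
        omega
      refine top_ne hqj ?_
      rw [show (q j).totalDegree = m by rw [hm, hj]]
      exact hcz j
    have degv : ∀ (i : Fin k) (a : Fin 3 →₀ ℕ), 3 < a 0 + a 1 + a 2 → coeff a (q i) = 0 := by
      intro i a ha
      exact coeff_zero_of_deg (lt_of_le_of_lt (hdeg i) (by rw [deg3]; omega))
    have coeffsum : ∀ d : Fin 3 →₀ ℕ, coeff d P
        = ∑ i, ∑ ab ∈ Finset.HasAntidiagonal.antidiagonal d, coeff ab.1 (q i) * coeff ab.2 (q i) := by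
      intro d
      rw [hq', coeff_sum]
      refine Finset.sum_congr rfl fun i _ => ?_
      rw [sq, coeff_mul]
    have key : ∀ (i : Fin k) (d e : Fin 3 →₀ ℕ), e + e = d →
        (∀ ab : (Fin 3 →₀ ℕ) × (Fin 3 →₀ ℕ), ab.1 + ab.2 = d → ab.1 ≠ e →
          coeff ab.1 (q i) * coeff ab.2 (q i) = 0) →
        ∑ ab ∈ Finset.HasAntidiagonal.antidiagonal d, coeff ab.1 (q i) * coeff ab.2 (q i)
          = coeff e (q i) ^ 2 := by
      intro i d e hde hvan
      rw [Finset.sum_eq_single_of_mem (e, e) (by rw [Finset.HasAntidiagonal.mem_antidiagonal]; exact hde)]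
      · rw [sq]
      · intro ab hab hne
        rw [Finset.HasAntidiagonal.mem_antidiagonal] at hab
        refine hvan ab hab fun h1 => hne ?_
        have h2 : ab.2 = e := by
          have h3 : e + ab.2 = e + e := by
            conv_lhs => rw [← h1]
            rw [hab]
            exact hde.symm
          exact add_left_cancel h3
        rw [Prod.ext_iff]
        exact ⟨h1, h2⟩
    -- a reusable extraction: from `coeff d P = 0` get vanishing of diagonal coefficient
    have extract : ∀ (X Y Z x y z : ℕ), M x y z + M x y z = M X Y Z →
        coeff (M X Y Z) P = 0 →
        (∀ (i : Fin k) (ab : (Fin 3 →₀ ℕ) × (Fin 3 →₀ ℕ)),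
          ab.1 + ab.2 = M X Y Z → ab.1 ≠ M x y z →
          coeff ab.1 (q i) * coeff ab.2 (q i) = 0) →
        ∀ i, coeff (M x y z) (q i) = 0 := by
      intro X Y Z x y z hXYZ hcoeff hvan i
      have hs : (0:ℝ) = ∑ j, coeff (M x y z) (q j) ^ 2 := by
        rw [← hcoeff, coeffsum]
        exact Finset.sum_congr rfl fun j _ => key j _ _ hXYZ (hvan j)
      have h := (Finset.sum_eq_zero_iff_of_nonneg
        (fun j _ => sq_nonneg (coeff (M x y z) (q j)))).mp hs.symm i (Finset.mem_univ i)
      exact pow_eq_zero_iff two_ne_zero |>.mp h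
    -- Round 1 : coefficients of x³, y³, z³ vanish
    have z300 : ∀ i, coeff (M 3 0 0) (q i) = 0 := by
      refine extract 6 0 0 3 0 0 (M_add_eq (by norm_num) (by norm_num) (by norm_num)) coeffP600 ?_
      intro i ab hab hne
      obtain ⟨h0, h1, h2⟩ := vals ab.1 ab.2 6 0 0 hab
      rcases Nat.lt_or_ge 3 (ab.1 0 + ab.1 1 + ab.1 2) with hA | hA
      · rw [degv i ab.1 hA, zero_mul]
      rcases Nat.lt_or_ge 3 (ab.2 0 + ab.2 1 + ab.2 2) with hB | hB
      · rw [degv i ab.2 hB, mul_zero]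
      exact absurd (eqv ab.1 3 0 0 (by omega) (by omega) (by omega)) hne
    have z030 : ∀ i, coeff (M 0 3 0) (q i) = 0 := by
      refine extract 0 6 0 0 3 0 (M_add_eq (by norm_num) (by norm_num) (by norm_num)) coeffP060 ?_
      intro i ab hab hne
      obtain ⟨h0, h1, h2⟩ := vals ab.1 ab.2 0 6 0 hab
      rcases Nat.lt_or_ge 3 (ab.1 0 + ab.1 1 + ab.1 2) with hA | hA
      · rw [degv i ab.1 hA, zero_mul]
      rcases Nat.lt_or_ge 3 (ab.2 0 + ab.2 1 + ab.2 2) with hB | hB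
      · rw [degv i ab.2 hB, mul_zero]
      exact absurd (eqv ab.1 0 3 0 (by omega) (by omega) (by omega)) hne
    have z003 : ∀ i, coeff (M 0 0 3) (q i) = 0 := by
      refine extract 0 0 6 0 0 3 (M_add_eq (by norm_num) (by norm_num) (by norm_num)) coeffP006 ?_
      intro i ab hab hne
      obtain ⟨h0, h1, h2⟩ := vals ab.1 ab.2 0 0 6 hab
      rcases Nat.lt_or_ge 3 (ab.1 0 + ab.1 1 + ab.1 2) with hA | hA
      · rw [degv i ab.1 hA, zero_mul]
      rcases Nat.lt_or_ge 3 (ab.2 0 + ab.2 1 + ab.2 2) with hB | hB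
      · rw [degv i ab.2 hB, mul_zero]
      exact absurd (eqv ab.1 0 0 3 (by omega) (by omega) (by omega)) hne
    -- Round 2 : coefficients of x²z, xy², yz² vanish
    have z201 : ∀ i, coeff (M 2 0 1) (q i) = 0 := by
      refine extract 4 0 2 2 0 1 (M_add_eq (by norm_num) (by norm_num) (by norm_num)) coeffP402 ?_
      intro i ab hab hne
      obtain ⟨h0, h1, h2⟩ := vals ab.1 ab.2 4 0 2 hab
      rcases Nat.lt_or_ge 3 (ab.1 0 + ab.1 1 + ab.1 2) with hA | hA
      · rw [degv i ab.1 hA, zero_mul]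
      rcases Nat.lt_or_ge 3 (ab.2 0 + ab.2 1 + ab.2 2) with hB | hB
      · rw [degv i ab.2 hB, mul_zero]
      have hne' : ¬(ab.1 0 = 2 ∧ ab.1 1 = 0 ∧ ab.1 2 = 1) :=
        fun ⟨e0, e1, e2⟩ => hne (eqv ab.1 2 0 1 e0 e1 e2)
      have hd : (ab.1 0 = 3 ∧ ab.1 1 = 0 ∧ ab.1 2 = 0)
          ∨ (ab.2 0 = 3 ∧ ab.2 1 = 0 ∧ ab.2 2 = 0) := by omega
      rcases hd with ⟨e0, e1, e2⟩ | ⟨e0, e1, e2⟩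
      · rw [eqv ab.1 3 0 0 e0 e1 e2, z300 i, zero_mul]
      · rw [eqv ab.2 3 0 0 e0 e1 e2, z300 i, mul_zero]
    have z120 : ∀ i, coeff (M 1 2 0) (q i) = 0 := by
      refine extract 2 4 0 1 2 0 (M_add_eq (by norm_num) (by norm_num) (by norm_num)) coeffP240 ?_
      intro i ab hab hne
      obtain ⟨h0, h1, h2⟩ := vals ab.1 ab.2 2 4 0 hab
      rcases Nat.lt_or_ge 3 (ab.1 0 + ab.1 1 + ab.1 2) with hA | hA
      · rw [degv i ab.1 hA, zero_mul]
      rcases Nat.lt_or_ge 3 (ab.2 0 + ab.2 1 + ab.2 2) with hB | hB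
      · rw [degv i ab.2 hB, mul_zero]
      have hne' : ¬(ab.1 0 = 1 ∧ ab.1 1 = 2 ∧ ab.1 2 = 0) :=
        fun ⟨e0, e1, e2⟩ => hne (eqv ab.1 1 2 0 e0 e1 e2)
      have hd : (ab.1 0 = 0 ∧ ab.1 1 = 3 ∧ ab.1 2 = 0)
          ∨ (ab.2 0 = 0 ∧ ab.2 1 = 3 ∧ ab.2 2 = 0) := by omega
      rcases hd with ⟨e0, e1, e2⟩ | ⟨e0, e1, e2⟩
      · rw [eqv ab.1 0 3 0 e0 e1 e2, z030 i, zero_mul]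
      · rw [eqv ab.2 0 3 0 e0 e1 e2, z030 i, mul_zero]
    have z012 : ∀ i, coeff (M 0 1 2) (q i) = 0 := by
      refine extract 0 2 4 0 1 2 (M_add_eq (by norm_num) (by norm_num) (by norm_num)) coeffP024 ?_
      intro i ab hab hne
      obtain ⟨h0, h1, h2⟩ := vals ab.1 ab.2 0 2 4 hab
      rcases Nat.lt_or_ge 3 (ab.1 0 + ab.1 1 + ab.1 2) with hA | hA
      · rw [degv i ab.1 hA, zero_mul]
      rcases Nat.lt_or_ge 3 (ab.2 0 + ab.2 1 + ab.2 2) with hB | hB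
      · rw [degv i ab.2 hB, mul_zero]
      have hne' : ¬(ab.1 0 = 0 ∧ ab.1 1 = 1 ∧ ab.1 2 = 2) :=
        fun ⟨e0, e1, e2⟩ => hne (eqv ab.1 0 1 2 e0 e1 e2)
      have hd : (ab.1 0 = 0 ∧ ab.1 1 = 0 ∧ ab.1 2 = 3)
          ∨ (ab.2 0 = 0 ∧ ab.2 1 = 0 ∧ ab.2 2 = 3) := by omega
      rcases hd with ⟨e0, e1, e2⟩ | ⟨e0, e1, e2⟩
      · rw [eqv ab.1 0 0 3 e0 e1 e2, z003 i, zero_mul]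
      · rw [eqv ab.2 0 0 3 e0 e1 e2, z003 i, mul_zero]
    -- Final contradiction using the coefficient of x²y²z²
    have hfin : (-3 : ℝ) = ∑ i, coeff (M 1 1 1) (q i) ^ 2 := by
      rw [← coeffP222, coeffsum]
      refine Finset.sum_congr rfl fun i _ => key i _ _ (M_add_eq (by norm_num) (by norm_num) (by norm_num)) ?_
      intro ab hab hne
      obtain ⟨h0, h1, h2⟩ := vals ab.1 ab.2 2 2 2 hab
      rcases Nat.lt_or_ge 3 (ab.1 0 + ab.1 1 + ab.1 2) with hA | hA
      · rw [degv i ab.1 hA, zero_mul]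
      rcases Nat.lt_or_ge 3 (ab.2 0 + ab.2 1 + ab.2 2) with hB | hB
      · rw [degv i ab.2 hB, mul_zero]
      have hne' : ¬(ab.1 0 = 1 ∧ ab.1 1 = 1 ∧ ab.1 2 = 1) :=
        fun ⟨e0, e1, e2⟩ => hne (eqv ab.1 1 1 1 e0 e1 e2)
      have hd : (ab.1 0 = 2 ∧ ab.1 1 = 0 ∧ ab.1 2 = 1)
          ∨ (ab.1 0 = 1 ∧ ab.1 1 = 2 ∧ ab.1 2 = 0)
          ∨ (ab.1 0 = 0 ∧ ab.1 1 = 1 ∧ ab.1 2 = 2)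
          ∨ (ab.2 0 = 2 ∧ ab.2 1 = 0 ∧ ab.2 2 = 1)
          ∨ (ab.2 0 = 1 ∧ ab.2 1 = 2 ∧ ab.2 2 = 0)
          ∨ (ab.2 0 = 0 ∧ ab.2 1 = 1 ∧ ab.2 2 = 2) := by omega
      rcases hd with ⟨e0,e1,e2⟩ | ⟨e0,e1,e2⟩ | ⟨e0,e1,e2⟩ | ⟨e0,e1,e2⟩ | ⟨e0,e1,e2⟩ | ⟨e0,e1,e2⟩
      · rw [eqv ab.1 2 0 1 e0 e1 e2, z201 i, zero_mul]
      · rw [eqv ab.1 1 2 0 e0 e1 e2, z120 i, zero_mul]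
      · rw [eqv ab.1 0 1 2 e0 e1 e2, z012 i, zero_mul]
      · rw [eqv ab.2 2 0 1 e0 e1 e2, z201 i, mul_zero]
      · rw [eqv ab.2 1 2 0 e0 e1 e2, z120 i, mul_zero]
      · rw [eqv ab.2 0 1 2 e0 e1 e2, z012 i, mul_zero]
    have hnn : (0 : ℝ) ≤ ∑ i, coeff (M 1 1 1) (q i) ^ 2 :=
      Finset.sum_nonneg fun i _ => sq_nonneg _
    linarith
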